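/- If L is the generator of a one-parameter semigroup of contractions on a finite-dimensional normed space, then the kernel of L and the range of L intersect trivially: Ker L ∩ Range L = {0}. -/

import Mathlib

/-- If `L` generates a one-parameter semigroup of contractions on a
finite-dimensional normed space, then `ker L ∩ range L = {0}`. -/
theorem stmt0 {E : Type*} [NormedAddCommGroup E] [NormedSpace ℂ E]
    [FiniteDimensional ℂ E] (L : E →L[ℂ] E)
    (hcontr : ∀ t : ℝ, 0 ≤ t → ‖NormedSpace.exp ((t : ℂ) • L)‖ ≤ 1) :
    LinearMap.ker (L : E →ₗ[ℂ] E) ⊓ LinearMap.range (L : E →ₗ[ℂ] E) = ⊥ := by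
  rw [Submodule.eq_bot_iff]
  rintro x ⟨hker, y, hy⟩
  simp only [SetLike.mem_coe, LinearMap.mem_ker, ContinuousLinearMap.coe_coe] at hker hy
  -- hker : L x = 0, hy : L y = x
  have key : ∀ t : ℝ, 0 ≤ t → ‖y + (t : ℂ) • x‖ ≤ ‖y‖ := by
    intro t ht
    have hA : NormedSpace.exp ((t : ℂ) • L) y = y + (t : ℂ) • x := by
      have hsum : Summable fun n : ℕ => ((Nat.factorial n : ℂ))⁻¹ • ((t : ℂ) • L) ^ n :=
        NormedSpace.expSeries_summable' ((t : ℂ) • L)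
      have happ := (ContinuousLinearMap.apply ℂ E y).map_tsum hsum
      simp only [ContinuousLinearMap.apply_apply] at happ
      rw [NormedSpace.exp_eq_tsum (𝕂 := ℂ), happ]
      have hzero : ∀ n ∉ ({0, 1} : Finset ℕ),
          (((Nat.factorial n : ℂ))⁻¹ • ((t : ℂ) • L) ^ n) y = 0 := by
        intro n hn
        match n with
        | 0 => simp at hn
        | 1 => simp at hn
        | (m + 2) =>
          have hz : (((t : ℂ) • L) ^ (m + 2)) y = 0 := by
            rw [pow_succ, pow_succ]
            simp only [ContinuousLinearMap.mul_apply, ContinuousLinearMap.smul_apply, hy, map_smul, hker, smul_zero, map_zero]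
          rw [ContinuousLinearMap.smul_apply, hz, smul_zero]
      rw [tsum_eq_sum hzero]
      simp [hy]
    calc ‖y + (t : ℂ) • x‖ = ‖NormedSpace.exp ((t : ℂ) • L) y‖ := by rw [hA]
      _ ≤ ‖NormedSpace.exp ((t : ℂ) • L)‖ * ‖y‖ :=
        (NormedSpace.exp ((t : ℂ) • L)).le_opNorm y
      _ ≤ 1 * ‖y‖ := by gcongr; exact hcontr t ht
      _ = ‖y‖ := one_mul _
  by_contra hx
  have hxpos : 0 < ‖x‖ := norm_pos_iff.mpr hx
  set t : ℝ := (2 * ‖y‖ + 1) / ‖x‖ with htdef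
  have ht : 0 ≤ t := by positivity
  have h1 := key t ht
  have h2 : ‖(t : ℂ) • x‖ ≤ ‖y + (t : ℂ) • x‖ + ‖y‖ := by
    calc ‖(t : ℂ) • x‖ = ‖(y + (t : ℂ) • x) - y‖ := by rw [add_sub_cancel_left]
      _ ≤ ‖y + (t : ℂ) • x‖ + ‖y‖ := norm_sub_le _ _
  have h3 : ‖(t : ℂ) • x‖ = t * ‖x‖ := by
    rw [norm_smul, Complex.norm_real, Real.norm_eq_abs, abs_of_nonneg ht]
  have h4 : t * ‖x‖ = 2 * ‖y‖ + 1 := by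
    rw [htdef, div_mul_cancel₀ _ (ne_of_gt hxpos)]
  linarith [h1, h2, h3, h4]
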